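/- Define sequences of functions by μ₁(s) = (κ₁/κ₂)(s+c), μ₂(s) = κ₁/(κ₂κ₃), and μ_{i+1}(s) = (μ_{i-1}(s)·κ_{i+1} + μ_i'(s))/κ_{i+2} for i ≥ 2, where κ₁, κ₂, … are nonzero real constants. Then for all m ≥ 1 (with indices in range), μ_{2m-1}(s) = ((κ₁κ₃⋯κ_{2m-1})/(κ₂κ₄⋯κ_{2m}))·(s+c) and μ_{2m}(s) = (∑_{j=1}^{m} (∏_{i=1}^{j} κ_{2i-1} · ∏_{i=j+1}^{m} κ_{2i})²) / (κ₁κ₂⋯κ_{2m+1}). -/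

import Mathlib

-- splitting the full product into odd and even factors
lemma prod_split (κ : ℕ → ℝ) : ∀ m : ℕ,
    (∏ i ∈ Finset.Icc 1 (2 * m + 1), κ i) =
      (∏ i ∈ Finset.Icc 1 (m + 1), κ (2 * i - 1)) * ∏ i ∈ Finset.Icc 1 m, κ (2 * i) := by
  intro m
  induction m with
  | zero => simp
  | succ m ih =>
    have A : (∏ i ∈ Finset.Icc 1 (2 * (m + 1) + 1), κ i) =
        ((∏ i ∈ Finset.Icc 1 (2 * m + 1), κ i) * κ (2 * m + 2)) * κ (2 * m + 3) := by
      rw [show 2 * (m + 1) + 1 = 2 * m + 2 + 1 by omega,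
        Finset.prod_Icc_succ_top (show (1:ℕ) ≤ 2 * m + 2 + 1 by omega) κ,
        show 2 * m + 2 = 2 * m + 1 + 1 from rfl,
        Finset.prod_Icc_succ_top (show (1:ℕ) ≤ 2 * m + 1 + 1 by omega) κ]
    have B : (∏ i ∈ Finset.Icc 1 (m + 1 + 1), κ (2 * i - 1)) =
        (∏ i ∈ Finset.Icc 1 (m + 1), κ (2 * i - 1)) * κ (2 * m + 3) := by
      rw [Finset.prod_Icc_succ_top (show (1:ℕ) ≤ m + 1 + 1 by omega) (fun i => κ (2 * i - 1)),
        show 2 * (m + 1 + 1) - 1 = 2 * m + 3 by omega]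
    have C : (∏ i ∈ Finset.Icc 1 (m + 1), κ (2 * i)) =
        (∏ i ∈ Finset.Icc 1 m, κ (2 * i)) * κ (2 * m + 2) := by
      rw [Finset.prod_Icc_succ_top (show (1:ℕ) ≤ m + 1 by omega) (fun i => κ (2 * i)),
        show 2 * (m + 1) = 2 * m + 2 by omega]
    rw [A, B, C, ih]
    ring

theorem stmt_13 (κ : ℕ → ℝ) (hκ : ∀ i, κ i ≠ 0) (c : ℝ) (μ : ℕ → ℝ → ℝ)
    (h1 : ∀ s : ℝ, μ 1 s = κ 1 / κ 2 * (s + c))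
    (h2 : ∀ s : ℝ, μ 2 s = κ 1 / (κ 2 * κ 3))
    (hrec : ∀ i, 2 ≤ i → ∀ s : ℝ,
      μ (i + 1) s = (μ (i - 1) s * κ (i + 1) + deriv (μ i) s) / κ (i + 2)) :
    ∀ m, 1 ≤ m → ∀ s : ℝ,
      μ (2 * m - 1) s =
        (∏ i ∈ Finset.Icc 1 m, κ (2 * i - 1)) / (∏ i ∈ Finset.Icc 1 m, κ (2 * i)) * (s + c) ∧
      μ (2 * m) s =
        (∑ j ∈ Finset.Icc 1 m,
          ((∏ i ∈ Finset.Icc 1 j, κ (2 * i - 1)) * ∏ i ∈ Finset.Icc (j + 1) m, κ (2 * i)) ^ 2) /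
        (∏ i ∈ Finset.Icc 1 (2 * m + 1), κ i) := by
  intro m hm
  induction m, hm using Nat.le_induction with
  | base =>
    intro s
    have hI : Finset.Icc 1 3 = ({1, 2, 3} : Finset ℕ) := by decide
    constructor
    · simpa using h1 s
    · rw [show 2 * 1 = 2 by norm_num, h2 s, show 2 * 1 + 1 = 3 by norm_num, hI]
      have h1' := hκ 1; have h2' := hκ 2; have h3' := hκ 3
      simp [Finset.Icc_self]
      field_simp
  | succ m hm ih =>
    -- abbreviations
    set Q := ∏ i ∈ Finset.Icc 1 m, κ (2 * i - 1) with hQ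
    set R := ∏ i ∈ Finset.Icc 1 m, κ (2 * i) with hR
    set S := ∑ j ∈ Finset.Icc 1 m,
        ((∏ i ∈ Finset.Icc 1 j, κ (2 * i - 1)) * ∏ i ∈ Finset.Icc (j + 1) m, κ (2 * i)) ^ 2
      with hS
    set P := ∏ i ∈ Finset.Icc 1 (2 * m + 1), κ i with hP
    have hμodd : ∀ s : ℝ, μ (2 * m - 1) s = Q / R * (s + c) := fun s => (ih s).1
    have hμev : μ (2 * m) = fun _ => S / P := funext fun s => (ih s).2
    have hPne : P ≠ 0 := Finset.prod_ne_zero_iff.2 fun i _ => hκ i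
    have hRne : R ≠ 0 := Finset.prod_ne_zero_iff.2 fun i _ => hκ _
    -- odd case
    have hodd : ∀ s : ℝ, μ (2 * m + 1) s =
        Q * κ (2 * m + 1) / (R * κ (2 * m + 2)) * (s + c) := by
      intro s
      have hr := hrec (2 * m) (by omega) s
      rw [hμev] at hr
      rw [hr, hμodd s]
      simp only [deriv_const]
      have := hκ (2 * m + 2)
      field_simp
      ring
    -- derivative of the odd one
    have hder : ∀ s : ℝ, deriv (μ (2 * m + 1)) s = Q * κ (2 * m + 1) / (R * κ (2 * m + 2)) := by
      intro s
      rw [funext hodd]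
      have h := (((hasDerivAt_id s).add_const c).const_mul
        (Q * κ (2 * m + 1) / (R * κ (2 * m + 2)))).deriv
      simpa using h
    -- even case
    have heven : ∀ s : ℝ, μ (2 * m + 2) s =
        (S * κ (2 * m + 2) ^ 2 + (Q * κ (2 * m + 1)) ^ 2) /
          (P * κ (2 * m + 2) * κ (2 * m + 3)) := by
      intro s
      have hr := hrec (2 * m + 1) (by omega) s
      have e : 2 * m + 1 - 1 = 2 * m := by omega
      rw [e] at hr
      rw [hr, hμev, hder s]
      have hsplit : P = Q * κ (2 * (m + 1) - 1) * R := by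
        rw [hP, prod_split κ m, hQ, hR, Finset.prod_Icc_succ_top (show 1 ≤ m + 1 by omega)]
      have e2 : 2 * (m + 1) - 1 = 2 * m + 1 := by omega
      rw [e2] at hsplit
      have h2' := hκ (2 * m + 2); have h3' := hκ (2 * m + 3)
      rw [hsplit]
      have hQne : Q ≠ 0 := Finset.prod_ne_zero_iff.2 fun i _ => hκ _
      have h1' := hκ (2 * m + 1)
      field_simp
    -- now conclude
    intro s
    have em1 : 2 * (m + 1) - 1 = 2 * m + 1 := by omega
    have em2 : 2 * (m + 1) = 2 * m + 2 := by omega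
    constructor
    · rw [em1, hodd s, Finset.prod_Icc_succ_top (show 1 ≤ m + 1 by omega),
        Finset.prod_Icc_succ_top (show 1 ≤ m + 1 by omega), em1, em2]
    · rw [em2, heven s]
      -- rewrite RHS sum and product
      have hsum : (∑ j ∈ Finset.Icc 1 (m + 1),
          ((∏ i ∈ Finset.Icc 1 j, κ (2 * i - 1)) *
            ∏ i ∈ Finset.Icc (j + 1) (m + 1), κ (2 * i)) ^ 2) =
          S * κ (2 * m + 2) ^ 2 + (Q * κ (2 * m + 1)) ^ 2 := by
        rw [Finset.sum_Icc_succ_top (show 1 ≤ m + 1 by omega)]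
        have hstep : ∀ j ∈ Finset.Icc 1 m,
            ((∏ i ∈ Finset.Icc 1 j, κ (2 * i - 1)) *
              ∏ i ∈ Finset.Icc (j + 1) (m + 1), κ (2 * i)) ^ 2 =
            ((∏ i ∈ Finset.Icc 1 j, κ (2 * i - 1)) *
              ∏ i ∈ Finset.Icc (j + 1) m, κ (2 * i)) ^ 2 * κ (2 * m + 2) ^ 2 := by
          intro j hj
          have hjm : j ≤ m := (Finset.mem_Icc.1 hj).2
          rw [Finset.prod_Icc_succ_top (show j + 1 ≤ m + 1 by omega), em2]
          ring
        rw [Finset.sum_congr rfl hstep, ← Finset.sum_mul, ← hS]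
        have : Finset.Icc (m + 1 + 1) (m + 1) = ∅ := by
          rw [Finset.Icc_eq_empty_iff]; omega
        rw [this, Finset.prod_empty, Finset.prod_Icc_succ_top (show 1 ≤ m + 1 by omega), ← hQ,
          em1]
        ring
      have hprod : (∏ i ∈ Finset.Icc 1 (2 * m + 2 + 1), κ i) =
          P * κ (2 * m + 2) * κ (2 * m + 3) := by
        rw [Finset.prod_Icc_succ_top (show (1:ℕ) ≤ 2 * m + 2 + 1 by omega) κ,
          Finset.prod_Icc_succ_top (show (1:ℕ) ≤ 2 * m + 2 by omega) κ, ← hP]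
      rw [hsum, hprod]
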